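/- Let f satisfy: f continuous, strictly increasing, f(0)=0, f piecewise C¹ with finitely many non-differentiability points none of which is 0. Let j, k be positive integers. Then the functions ψ₁(y,z) = (2/π)∫₀^π [f(y sin(jx)+z sin(kx)) + f(y sin(jx)-z sin(kx))] sin(jx) dx and ψ₂(y,z) = (2/π)∫₀^π [f(y sin(jx)+z sin(kx)) - f(y sin(jx)-z sin(kx))] sin(kx) dx are of class C¹ on ℝ². -/

import Mathlib

open Real Set MeasureTheory Filter Metric intervalIntegral

open scoped Topology Interval NNReal

private lemma glue_mono {g : ℝ → ℝ} {a s b : ℝ} (has : a ≤ s) (hsb : s ≤ b)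
    (h₁ : MonotoneOn g (Set.Icc a s)) (h₂ : MonotoneOn g (Set.Icc s b)) :
    MonotoneOn g (Set.Icc a b) := by
  intro x hx y hy hxy
  rcases le_total y s with h | h
  · exact h₁ ⟨hx.1, hxy.trans h⟩ ⟨hy.1, h⟩ hxy
  · rcases le_total x s with h' | h'
    · exact le_trans (h₁ ⟨hx.1, h'⟩ ⟨has, le_rfl⟩ h') (h₂ ⟨le_rfl, hsb⟩ ⟨h, hy.2⟩ h)
    · exact h₂ ⟨h', hx.2⟩ ⟨h'.trans hxy, hy.2⟩ hxy

private lemma mono_aux (S : Finset ℝ) :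
    ∀ (g : ℝ → ℝ) (a b : ℝ), ContinuousOn g (Set.Icc a b) →
    (∀ x ∈ Set.Ioo a b, x ∉ S → DifferentiableAt ℝ g x) →
    (∀ x ∈ Set.Ioo a b, x ∉ S → 0 ≤ deriv g x) →
    MonotoneOn g (Set.Icc a b) := by
  induction S using Finset.induction_on with
  | empty =>
    intro g a b hc hd h0
    apply monotoneOn_of_deriv_nonneg (convex_Icc a b) hc
    · rw [interior_Icc]
      exact fun x hx => (hd x hx (by simp)).differentiableWithinAt
    · rw [interior_Icc]; exact fun x hx => h0 x hx (by simp)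
  | @insert s S' hs ih =>
    intro g a b hc hd h0
    by_cases hmem : s ∈ Set.Ioo a b
    · have h₁ := ih g a s (hc.mono (Set.Icc_subset_Icc le_rfl hmem.2.le))
        (fun x hx hxS => hd x ⟨hx.1, hx.2.trans hmem.2⟩
          (by simp only [Finset.mem_insert, not_or]; exact ⟨ne_of_lt hx.2, hxS⟩))
        (fun x hx hxS => h0 x ⟨hx.1, hx.2.trans hmem.2⟩
          (by simp only [Finset.mem_insert, not_or]; exact ⟨ne_of_lt hx.2, hxS⟩))
      have h₂ := ih g s b (hc.mono (Set.Icc_subset_Icc hmem.1.le le_rfl))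
        (fun x hx hxS => hd x ⟨hmem.1.trans hx.1, hx.2⟩
          (by simp only [Finset.mem_insert, not_or]; exact ⟨(ne_of_gt hx.1), hxS⟩))
        (fun x hx hxS => h0 x ⟨hmem.1.trans hx.1, hx.2⟩
          (by simp only [Finset.mem_insert, not_or]; exact ⟨(ne_of_gt hx.1), hxS⟩))
      exact glue_mono hmem.1.le hmem.2.le h₁ h₂
    · refine ih g a b hc (fun x hx hxS => hd x hx ?_) (fun x hx hxS => h0 x hx ?_) <;>
      · simp only [Finset.mem_insert, not_or]
        exact ⟨fun hxs => hmem (hxs ▸ hx), hxS⟩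

private lemma lip_aux (S : Finset ℝ) (g : ℝ → ℝ) (a b C : ℝ) (hC : 0 ≤ C)
    (hc : ContinuousOn g (Set.Icc a b))
    (hd : ∀ x ∈ Set.Ioo a b, x ∉ S → DifferentiableAt ℝ g x)
    (hb : ∀ x ∈ Set.Ioo a b, x ∉ S → |deriv g x| ≤ C) :
    ∀ x ∈ Set.Icc a b, ∀ y ∈ Set.Icc a b, |g y - g x| ≤ C * |y - x| := by
  have hCt : ∀ t : ℝ, HasDerivAt (fun t : ℝ => C * t) C t := by
    intro t
    simpa using (hasDerivAt_id t).const_mul C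
  have m₁ : MonotoneOn (fun t => C * t - g t) (Set.Icc a b) := by
    apply mono_aux S (fun t => C * t - g t) a b
    · exact ((continuous_const.mul continuous_id).continuousOn).sub hc
    · intro t ht htS; exact (differentiableAt_id.const_mul C).sub (hd t ht htS)
    · intro t ht htS
      have h1 : HasDerivAt (fun t : ℝ => C * t - g t) (C - deriv g t) t :=
        (hCt t).sub (hd t ht htS).hasDerivAt
      rw [h1.deriv]
      have := (abs_le.1 (hb t ht htS)).2
      linarith
  have m₂ : MonotoneOn (fun t => C * t + g t) (Set.Icc a b) := by
    apply mono_aux S (fun t => C * t + g t) a b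
    · exact ((continuous_const.mul continuous_id).continuousOn).add hc
    · intro t ht htS; exact (differentiableAt_id.const_mul C).add (hd t ht htS)
    · intro t ht htS
      have h1 : HasDerivAt (fun t : ℝ => C * t + g t) (C + deriv g t) t :=
        (hCt t).add (hd t ht htS).hasDerivAt
      rw [h1.deriv]
      have := (abs_le.1 (hb t ht htS)).1
      linarith
  have key : ∀ x ∈ Set.Icc a b, ∀ y ∈ Set.Icc a b, x ≤ y → |g y - g x| ≤ C * (y - x) := by
    intro x hx y hy hxy
    have h1 := m₁ hx hy hxy
    have h2 := m₂ hx hy hxy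
    simp only at h1 h2
    rw [abs_le]
    constructor <;> linarith
  intro x hx y hy
  rcases le_total x y with h | h
  · rw [abs_of_nonneg (sub_nonneg.2 h)]
    exact key x hx y hy h
  · rw [abs_sub_comm, abs_sub_comm y x, abs_of_nonneg (sub_nonneg.2 h)]
    exact key y hy x hx h

private lemma bound_aux (f : ℝ → ℝ) (S : Finset ℝ)
    (hcont : ContinuousOn (deriv f) ((S : Set ℝ))ᶜ)
    (hlim : ∀ r ∈ S,
      (∃ L : ℝ, Filter.Tendsto (deriv f) (nhdsWithin r (Set.Ioi r)) (nhds L)) ∧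
      (∃ L : ℝ, Filter.Tendsto (deriv f) (nhdsWithin r (Set.Iio r)) (nhds L)))
    (A B : ℝ) : ∃ C : ℝ, 0 ≤ C ∧ ∀ y ∈ Set.Icc A B, |deriv f y| ≤ C := by
  have hSopen : IsOpen ((S : Set ℝ))ᶜ := (S.finite_toSet.isClosed).isOpen_compl
  have loc : ∀ x : ℝ, ∃ U ∈ 𝓝 x, ∃ M : ℝ, ∀ y ∈ U, |deriv f y| ≤ M := by
    intro x
    by_cases hx : x ∈ S
    · obtain ⟨⟨L, hL⟩, ⟨L', hL'⟩⟩ := hlim x hx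
      set M := max (max (|L| + 1) (|L'| + 1)) (|deriv f x|) with hM
      have h₁ : ∀ᶠ y in 𝓝[>] x, |deriv f y| ≤ M := by
        filter_upwards [hL.eventually_mem (Metric.ball_mem_nhds L one_pos)] with y hy
        have h : |deriv f y - L| < 1 := by simpa [Real.dist_eq] using hy
        have : |deriv f y| ≤ |L| + 1 := by
          calc |deriv f y| = |(deriv f y - L) + L| := by ring_nf
            _ ≤ |deriv f y - L| + |L| := abs_add_le _ _
            _ ≤ |L| + 1 := by linarith
        exact le_trans this (le_trans (le_max_left _ _) (le_max_left _ _))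
      have h₂ : ∀ᶠ y in 𝓝[<] x, |deriv f y| ≤ M := by
        filter_upwards [hL'.eventually_mem (Metric.ball_mem_nhds L' one_pos)] with y hy
        have h : |deriv f y - L'| < 1 := by simpa [Real.dist_eq] using hy
        have : |deriv f y| ≤ |L'| + 1 := by
          calc |deriv f y| = |(deriv f y - L') + L'| := by ring_nf
            _ ≤ |deriv f y - L'| + |L'| := abs_add_le _ _
            _ ≤ |L'| + 1 := by linarith
        exact le_trans this (le_trans (le_max_right _ _) (le_max_left _ _))
      have h₃ : ∀ᶠ y in 𝓝[≠] x, |deriv f y| ≤ M := by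
        rw [← nhdsLT_sup_nhdsGT]
        exact eventually_sup.2 ⟨h₂, h₁⟩
      have h₄ : ∀ᶠ y in 𝓝 x, |deriv f y| ≤ M := by
        rw [← nhdsNE_sup_pure]
        exact eventually_sup.2 ⟨h₃, Filter.eventually_pure.2 (le_max_right _ _)⟩
      exact ⟨{y | |deriv f y| ≤ M}, h₄, M, fun y hy => hy⟩
    · have hca : ContinuousAt (deriv f) x := hcont.continuousAt (hSopen.mem_nhds hx)
      have h₄ : ∀ᶠ y in 𝓝 x, |deriv f y| ≤ |deriv f x| + 1 := by
        filter_upwards [hca.eventually_mem (Metric.ball_mem_nhds _ one_pos)] with y hy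
        have h : |deriv f y - deriv f x| < 1 := by simpa [Real.dist_eq] using hy
        calc |deriv f y| = |(deriv f y - deriv f x) + deriv f x| := by ring_nf
          _ ≤ |deriv f y - deriv f x| + |deriv f x| := abs_add_le _ _
          _ ≤ |deriv f x| + 1 := by linarith
      exact ⟨{y | |deriv f y| ≤ |deriv f x| + 1}, h₄, |deriv f x| + 1, fun y hy => hy⟩
  choose U hU M hM using loc
  obtain ⟨t, -, ht⟩ := isCompact_Icc.elim_nhds_subcover U (fun x (_ : x ∈ Set.Icc A B) => hU x)
  refine ⟨(insert (0:ℝ) (t.image M)).max' (Finset.insert_nonempty _ _), ?_, ?_⟩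
  · exact Finset.le_max' _ 0 (Finset.mem_insert_self _ _)
  · intro y hy
    obtain ⟨x, hxt, hyx⟩ := Set.mem_iUnion₂.1 (ht hy)
    refine le_trans (hM x y hyx) (Finset.le_max' _ _ ?_)
    exact Finset.mem_insert_of_mem (Finset.mem_image_of_mem M hxt)

private lemma finite_zeros {h : ℝ → ℝ} (hh : ∀ x, AnalyticAt ℝ h x) (h0 : h 0 ≠ 0) (a b : ℝ) :
    {x ∈ Set.Icc a b | h x = 0}.Finite := by
  have hcont : Continuous h := continuous_iff_continuousAt.2 fun x => (hh x).continuousAt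
  have hset : {x ∈ Set.Icc a b | h x = 0} = Set.Icc a b ∩ h ⁻¹' {0} := by
    ext x; simp [Set.mem_setOf_eq, Set.mem_inter_iff]
  have hZc : IsCompact {x ∈ Set.Icc a b | h x = 0} := by
    rw [hset]
    exact isCompact_Icc.inter_right (isClosed_singleton.preimage hcont)
  have hA : AnalyticOnNhd ℝ h Set.univ := fun x _ => hh x
  have hiso : ∀ x : ℝ, h x = 0 → ∀ᶠ z in 𝓝[≠] x, h z ≠ 0 := by
    intro x _
    rcases (hh x).eventually_eq_zero_or_eventually_ne_zero with hev | hev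
    · exfalso
      have heq := hA.eqOn_zero_of_preconnected_of_frequently_eq_zero isPreconnected_univ
        (Set.mem_univ x) ((hev.filter_mono nhdsWithin_le_nhds).frequently)
      exact h0 (heq (Set.mem_univ 0))
    · exact hev
  have hdisc : DiscreteTopology ({x ∈ Set.Icc a b | h x = 0} : Set ℝ) := by
    rw [discreteTopology_subtype_iff]
    intro x hx
    rw [Filter.inf_principal_eq_bot]
    refine Filter.mem_of_superset (hiso x hx.2) ?_
    intro z hz hzZ
    exact hz hzZ.2
  exact hZc.finite (isDiscrete_iff_discreteTopology.2 hdisc)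

private lemma analyticAt_rsin (x : ℝ) : AnalyticAt ℝ Real.sin x := by
  have h1 : AnalyticAt ℂ Complex.sin (Complex.ofRealCLM x) :=
    Complex.differentiable_sin.analyticAt _
  have h2 : AnalyticAt ℝ Complex.sin (Complex.ofRealCLM x) := h1.restrictScalars
  have h3 : AnalyticAt ℝ (fun y : ℝ => Complex.reCLM (Complex.sin (Complex.ofRealCLM y))) x :=
    ((Complex.reCLM.analyticAt _).comp h2).comp (Complex.ofRealCLM.analyticAt x)
  have heq : (fun y : ℝ => Complex.reCLM (Complex.sin (Complex.ofRealCLM y))) = Real.sin := by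
    funext y
    simp [Complex.ofRealCLM_apply, Complex.reCLM_apply, Complex.sin_ofReal_re]
  rwa [heq] at h3

private lemma key_c1 (f : ℝ → ℝ) (hf : Continuous f)
    (S : Finset ℝ) (hS0 : (0:ℝ) ∉ S)
    (hdiff : ∀ x ∉ (S : Set ℝ), DifferentiableAt ℝ f x)
    (hcont : ContinuousOn (deriv f) ((S : Set ℝ))ᶜ)
    (hlim : ∀ r ∈ S,
      (∃ L : ℝ, Filter.Tendsto (deriv f) (nhdsWithin r (Set.Ioi r)) (nhds L)) ∧
      (∃ L : ℝ, Filter.Tendsto (deriv f) (nhdsWithin r (Set.Iio r)) (nhds L)))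
    (u v w : ℝ → ℝ) (hu : ∀ x, AnalyticAt ℝ u x) (hv : ∀ x, AnalyticAt ℝ v x)
    (hw : Continuous w) (hu0 : u 0 = 0) (hv0 : v 0 = 0) :
    ContDiff ℝ 1 (fun p : ℝ × ℝ => ∫ x in (0:ℝ)..π, f (p.1 * u x + p.2 * v x) * w x) := by
  have hSopen : IsOpen ((S : Set ℝ))ᶜ := (S.finite_toSet.isClosed).isOpen_compl
  have hucont : Continuous u := continuous_iff_continuousAt.2 fun x => (hu x).continuousAt
  have hvcont : Continuous v := continuous_iff_continuousAt.2 fun x => (hv x).continuousAt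
  obtain ⟨Mu, hMu0, hMu⟩ : ∃ M : ℝ, 0 ≤ M ∧ ∀ x ∈ Set.Icc (0:ℝ) π, |u x| ≤ M := by
    obtain ⟨M, hM⟩ := isCompact_Icc.exists_bound_of_continuousOn hucont.continuousOn
    exact ⟨max M 0, le_max_right _ _,
      fun x hx => le_trans (by simpa using hM x hx) (le_max_left _ _)⟩
  obtain ⟨Mv, hMv0, hMv⟩ : ∃ M : ℝ, 0 ≤ M ∧ ∀ x ∈ Set.Icc (0:ℝ) π, |v x| ≤ M := by
    obtain ⟨M, hM⟩ := isCompact_Icc.exists_bound_of_continuousOn hvcont.continuousOn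
    exact ⟨max M 0, le_max_right _ _,
      fun x hx => le_trans (by simpa using hM x hx) (le_max_left _ _)⟩
  obtain ⟨Mw, hMw0, hMw⟩ : ∃ M : ℝ, 0 ≤ M ∧ ∀ x ∈ Set.Icc (0:ℝ) π, |w x| ≤ M := by
    obtain ⟨M, hM⟩ := isCompact_Icc.exists_bound_of_continuousOn hw.continuousOn
    exact ⟨max M 0, le_max_right _ _,
      fun x hx => le_trans (by simpa using hM x hx) (le_max_left _ _)⟩
  set g : ℝ × ℝ → ℝ → ℝ := fun p x => p.1 * u x + p.2 * v x with hg
  have hgc : ∀ x, Continuous fun p : ℝ × ℝ => g p x := fun x =>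
    (continuous_fst.mul continuous_const).add (continuous_snd.mul continuous_const)
  have hgx : ∀ p, Continuous (g p) := fun p =>
    (continuous_const.mul hucont).add (continuous_const.mul hvcont)
  have hmeas1 : ∀ p, AEStronglyMeasurable (fun x => deriv f (g p x) * (u x * w x))
      (volume.restrict (Ι (0:ℝ) π)) := fun p =>
    (((measurable_deriv f).comp (hgx p).measurable).aestronglyMeasurable).mul
      ((hucont.mul hw).aestronglyMeasurable)
  have hmeas2 : ∀ p, AEStronglyMeasurable (fun x => deriv f (g p x) * (v x * w x))
      (volume.restrict (Ι (0:ℝ) π)) := fun p =>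
    (((measurable_deriv f).comp (hgx p).measurable).aestronglyMeasurable).mul
      ((hvcont.mul hw).aestronglyMeasurable)
  have hIsub : Ι (0:ℝ) π ⊆ Set.Icc (0:ℝ) π := by
    rw [Set.uIoc_of_le Real.pi_pos.le]; exact Set.Ioc_subset_Icc_self
  have hfinite : ∀ q : ℝ × ℝ, {x ∈ Set.Icc (0:ℝ) π | g q x ∈ S}.Finite := by
    intro q
    have hsub : {x ∈ Set.Icc (0:ℝ) π | g q x ∈ S} ⊆
        ⋃ r ∈ (S : Set ℝ), {x ∈ Set.Icc (0:ℝ) π | g q x - r = 0} := by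
      intro x hx
      exact Set.mem_biUnion hx.2 ⟨hx.1, sub_eq_zero.2 rfl⟩
    refine Set.Finite.subset (Set.Finite.biUnion S.finite_toSet fun r hr => ?_) hsub
    refine finite_zeros (h := fun x => g q x - r) ?_ ?_ 0 π
    · intro x
      exact ((analyticAt_const.mul (hu x)).add (analyticAt_const.mul (hv x))).sub analyticAt_const
    · simp only [hg, hu0, hv0, mul_zero, add_zero, zero_sub, ne_eq, neg_eq_zero]
      exact fun h => hS0 (h ▸ hr)
  have hae : ∀ q : ℝ × ℝ, ∀ᵐ x : ℝ, x ∈ Ι (0:ℝ) π → g q x ∉ S := by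
    intro q
    have hnull : volume {x ∈ Set.Icc (0:ℝ) π | g q x ∈ S} = 0 := (hfinite q).measure_zero _
    rw [ae_iff]
    refine measure_mono_null (fun x hx => ?_) hnull
    push_neg at hx
    exact ⟨hIsub hx.1, hx.2⟩
  set c₁ : ℝ × ℝ → ℝ := fun p => ∫ x in (0:ℝ)..π, deriv f (g p x) * (u x * w x) with hc₁def
  set c₂ : ℝ × ℝ → ℝ := fun p => ∫ x in (0:ℝ)..π, deriv f (g p x) * (v x * w x) with hc₂def
  set A : ℝ × ℝ → (ℝ × ℝ →L[ℝ] ℝ) := fun p =>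
    c₁ p • ContinuousLinearMap.fst ℝ ℝ ℝ + c₂ p • ContinuousLinearMap.snd ℝ ℝ ℝ with hAdef
  have main : ∀ p₀ : ℝ × ℝ,
      HasFDerivAt (fun p : ℝ × ℝ => ∫ x in (0:ℝ)..π, f (g p x) * w x) (A p₀) p₀ ∧
      ContinuousAt c₁ p₀ ∧ ContinuousAt c₂ p₀ := by
    intro p₀
    set R : ℝ := (|p₀.1| + 1) * Mu + (|p₀.2| + 1) * Mv with hRdef
    obtain ⟨C, hC0, hCb, hClip⟩ : ∃ C : ℝ, 0 ≤ C ∧ (∀ y ∈ Set.Icc (-R) R, |deriv f y| ≤ C) ∧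
        ∀ x ∈ Set.Icc (-R) R, ∀ y ∈ Set.Icc (-R) R, |f y - f x| ≤ C * |y - x| := by
      obtain ⟨C, hC0, hCb⟩ := bound_aux f S hcont hlim (-R) R
      exact ⟨C, hC0, hCb, lip_aux S f (-R) R C hC0 hf.continuousOn
        (fun x _ hxS => hdiff x hxS) (fun x hx _ => hCb x (Set.Ioo_subset_Icc_self hx))⟩
    have hmem : ∀ p ∈ Metric.ball p₀ 1, ∀ x ∈ Set.Icc (0:ℝ) π, g p x ∈ Set.Icc (-R) R := by
      intro p hp x hx
      have hdp : dist p p₀ < 1 := mem_ball.1 hp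
      have h1 : |p.1 - p₀.1| ≤ dist p p₀ := by
        rw [Prod.dist_eq, ← Real.dist_eq]; exact le_max_left _ _
      have h2 : |p.2 - p₀.2| ≤ dist p p₀ := by
        rw [Prod.dist_eq, ← Real.dist_eq]; exact le_max_right _ _
      have hp1 : |p.1| ≤ |p₀.1| + 1 := by
        calc |p.1| = |p₀.1 + (p.1 - p₀.1)| := by ring_nf
          _ ≤ |p₀.1| + |p.1 - p₀.1| := abs_add_le _ _
          _ ≤ |p₀.1| + 1 := by linarith
      have hp2 : |p.2| ≤ |p₀.2| + 1 := by
        calc |p.2| = |p₀.2 + (p.2 - p₀.2)| := by ring_nf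
          _ ≤ |p₀.2| + |p.2 - p₀.2| := abs_add_le _ _
          _ ≤ |p₀.2| + 1 := by linarith
      have habs : |g p x| ≤ R := by
        calc |g p x| ≤ |p.1 * u x| + |p.2 * v x| := abs_add_le _ _
          _ = |p.1| * |u x| + |p.2| * |v x| := by rw [abs_mul, abs_mul]
          _ ≤ (|p₀.1| + 1) * Mu + (|p₀.2| + 1) * Mv :=
              add_le_add (mul_le_mul hp1 (hMu x hx) (abs_nonneg _) (by positivity))
                (mul_le_mul hp2 (hMv x hx) (abs_nonneg _) (by positivity))
      rw [Set.mem_Icc]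
      exact abs_le.1 habs
    -- derivative part
    have hbound1 : ∀ p ∈ Metric.ball p₀ 1, ∀ x ∈ Ι (0:ℝ) π,
        |deriv f (g p x) * (u x * w x)| ≤ C * (Mu * Mw) := by
      intro p hp x hx
      have hxIcc := hIsub hx
      rw [abs_mul, abs_mul]
      have h1 := hCb _ (hmem p hp x hxIcc)
      have h2 := hMu x hxIcc
      have h3 := hMw x hxIcc
      have := mul_le_mul h2 h3 (abs_nonneg _) hMu0
      exact mul_le_mul h1 this (by positivity) hC0
    have hbound2 : ∀ p ∈ Metric.ball p₀ 1, ∀ x ∈ Ι (0:ℝ) π,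
        |deriv f (g p x) * (v x * w x)| ≤ C * (Mv * Mw) := by
      intro p hp x hx
      have hxIcc := hIsub hx
      rw [abs_mul, abs_mul]
      have h1 := hCb _ (hmem p hp x hxIcc)
      have h2 := hMv x hxIcc
      have h3 := hMw x hxIcc
      have := mul_le_mul h2 h3 (abs_nonneg _) hMv0
      exact mul_le_mul h1 this (by positivity) hC0
    have ia : IntervalIntegrable (fun x => deriv f (g p₀ x) * (u x * w x)) volume 0 π := by
      refine IntervalIntegrable.mono_fun' (g := fun _ => C * (Mu * Mw))
        intervalIntegrable_const (hmeas1 p₀) ?_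
      refine (MeasureTheory.ae_restrict_iff' measurableSet_uIoc).2 (MeasureTheory.ae_of_all _
        fun x hx => ?_)
      simpa only [Real.norm_eq_abs] using hbound1 p₀ (mem_ball_self one_pos) x hx
    have ib : IntervalIntegrable (fun x => deriv f (g p₀ x) * (v x * w x)) volume 0 π := by
      refine IntervalIntegrable.mono_fun' (g := fun _ => C * (Mv * Mw))
        intervalIntegrable_const (hmeas2 p₀) ?_
      refine (MeasureTheory.ae_restrict_iff' measurableSet_uIoc).2 (MeasureTheory.ae_of_all _
        fun x hx => ?_)
      simpa only [Real.norm_eq_abs] using hbound2 p₀ (mem_ball_self one_pos) x hx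
    have hfd := intervalIntegral.hasFDerivAt_integral_of_dominated_loc_of_lip
      (F := fun (p : ℝ × ℝ) (x : ℝ) => f (g p x) * w x)
      (F' := fun x : ℝ => (deriv f (g p₀ x) * (u x * w x)) • ContinuousLinearMap.fst ℝ ℝ ℝ
        + (deriv f (g p₀ x) * (v x * w x)) • ContinuousLinearMap.snd ℝ ℝ ℝ)
      (x₀ := p₀) (bound := fun _ => C * ((Mu + Mv) * Mw)) (μ := volume) (a := 0) (b := π)
      (Metric.ball_mem_nhds p₀ one_pos)
      (Filter.Eventually.of_forall fun p => ((hf.comp (hgx p)).mul hw).aestronglyMeasurable)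
      (((hf.comp (hgx p₀)).mul hw).intervalIntegrable 0 π)
      (((hmeas1 p₀).smul_const _).add ((hmeas2 p₀).smul_const _))
      (MeasureTheory.ae_of_all _ fun x hxI => by
        have hxIcc := hIsub hxI
        apply LipschitzOnWith.of_dist_le_mul
        intro p hp q hq
        rw [Real.dist_eq]
        have hcoe : ((Real.nnabs (C * ((Mu + Mv) * Mw)) : ℝ≥0) : ℝ) = C * ((Mu + Mv) * Mw) := by
          rw [Real.coe_nnabs, abs_of_nonneg (by positivity)]
        rw [hcoe]
        have hgd : |g p x - g q x| ≤ (Mu + Mv) * dist p q := by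
          have hrw : g p x - g q x = (p.1 - q.1) * u x + (p.2 - q.2) * v x := by
            simp only [hg]; ring
          have h1 : |p.1 - q.1| ≤ dist p q := by
            rw [Prod.dist_eq, ← Real.dist_eq]; exact le_max_left _ _
          have h2 : |p.2 - q.2| ≤ dist p q := by
            rw [Prod.dist_eq, ← Real.dist_eq]; exact le_max_right _ _
          calc |g p x - g q x| ≤ |(p.1 - q.1) * u x| + |(p.2 - q.2) * v x| := by
                rw [hrw]; exact abs_add_le _ _
            _ = |p.1 - q.1| * |u x| + |p.2 - q.2| * |v x| := by rw [abs_mul, abs_mul]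
            _ ≤ dist p q * Mu + dist p q * Mv :=
                add_le_add (mul_le_mul h1 (hMu x hxIcc) (abs_nonneg _) dist_nonneg)
                  (mul_le_mul h2 (hMv x hxIcc) (abs_nonneg _) dist_nonneg)
            _ = (Mu + Mv) * dist p q := by ring
        calc |f (g p x) * w x - f (g q x) * w x| = |f (g p x) - f (g q x)| * |w x| := by
              rw [← sub_mul, abs_mul]
          _ ≤ (C * |g p x - g q x|) * Mw := by
              refine mul_le_mul (hClip _ (hmem q hq x hxIcc) _ (hmem p hp x hxIcc))
                (hMw x hxIcc) (abs_nonneg _) (by positivity)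
          _ ≤ (C * ((Mu + Mv) * dist p q)) * Mw := by
              refine mul_le_mul_of_nonneg_right (mul_le_mul_of_nonneg_left hgd hC0) hMw0
          _ = C * ((Mu + Mv) * Mw) * dist p q := by ring)
      intervalIntegrable_const
      (by
        filter_upwards [hae p₀] with x hx hxI
        have hxS : g p₀ x ∉ S := hx hxI
        have hL : HasFDerivAt (fun p : ℝ × ℝ => g p x)
            (u x • ContinuousLinearMap.fst ℝ ℝ ℝ + v x • ContinuousLinearMap.snd ℝ ℝ ℝ) p₀ := by
          have heq : (fun p : ℝ × ℝ => g p x) =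
              ⇑(u x • ContinuousLinearMap.fst ℝ ℝ ℝ + v x • ContinuousLinearMap.snd ℝ ℝ ℝ) := by
            funext p
            simp [hg, mul_comm]
          rw [heq]
          exact (u x • ContinuousLinearMap.fst ℝ ℝ ℝ
            + v x • ContinuousLinearMap.snd ℝ ℝ ℝ).hasFDerivAt
        have hfdd : HasDerivAt f (deriv f (g p₀ x)) (g p₀ x) := (hdiff _ hxS).hasDerivAt
        have hcomp := (hfdd.comp_hasFDerivAt p₀ hL).mul_const (w x)
        have hEq : (deriv f (g p₀ x) * (u x * w x)) • ContinuousLinearMap.fst ℝ ℝ ℝ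
            + (deriv f (g p₀ x) * (v x * w x)) • ContinuousLinearMap.snd ℝ ℝ ℝ
            = w x • deriv f (g p₀ x) • (u x • ContinuousLinearMap.fst ℝ ℝ ℝ
              + v x • ContinuousLinearMap.snd ℝ ℝ ℝ) := by
          apply ContinuousLinearMap.ext
          intro q
          simp only [ContinuousLinearMap.smul_apply, ContinuousLinearMap.add_apply,
            ContinuousLinearMap.coe_fst', ContinuousLinearMap.coe_snd', smul_eq_mul]
          ring
        rw [hEq]
        exact hcomp)
    have hsum : (∫ x in (0:ℝ)..π,
        ((deriv f (g p₀ x) * (u x * w x)) • ContinuousLinearMap.fst ℝ ℝ ℝ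
          + (deriv f (g p₀ x) * (v x * w x)) • ContinuousLinearMap.snd ℝ ℝ ℝ)) = A p₀ := by
      have ia' : IntervalIntegrable
          (fun x => (deriv f (g p₀ x) * (u x * w x)) • ContinuousLinearMap.fst ℝ ℝ ℝ)
          volume 0 π := by
        rw [intervalIntegrable_iff] at ia ⊢
        exact ia.smul_const _
      have ib' : IntervalIntegrable
          (fun x => (deriv f (g p₀ x) * (v x * w x)) • ContinuousLinearMap.snd ℝ ℝ ℝ)
          volume 0 π := by
        rw [intervalIntegrable_iff] at ib ⊢
        exact ib.smul_const _
      rw [intervalIntegral.integral_add ia' ib', intervalIntegral.integral_smul_const,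
        intervalIntegral.integral_smul_const]
    refine ⟨hsum ▸ hfd.2, ?_, ?_⟩
    · refine intervalIntegral.tendsto_integral_filter_of_dominated_convergence
        (bound := fun _ => C * (Mu * Mw))
        (Filter.Eventually.of_forall fun p => hmeas1 p) ?_ intervalIntegrable_const ?_
      · filter_upwards [Metric.ball_mem_nhds p₀ one_pos] with p hp
        exact MeasureTheory.ae_of_all _ fun x hx => by
          simpa only [Real.norm_eq_abs] using hbound1 p hp x hx
      · filter_upwards [hae p₀] with x hx hxI
        have hxS : g p₀ x ∉ S := hx hxI
        have h1 : ContinuousAt (deriv f) (g p₀ x) := hcont.continuousAt (hSopen.mem_nhds hxS)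
        have h2 : ContinuousAt (fun p : ℝ × ℝ => deriv f (g p x)) p₀ :=
          Filter.Tendsto.comp h1 ((hgc x).continuousAt)
        exact h2.mul continuousAt_const
    · refine intervalIntegral.tendsto_integral_filter_of_dominated_convergence
        (bound := fun _ => C * (Mv * Mw))
        (Filter.Eventually.of_forall fun p => hmeas2 p) ?_ intervalIntegrable_const ?_
      · filter_upwards [Metric.ball_mem_nhds p₀ one_pos] with p hp
        exact MeasureTheory.ae_of_all _ fun x hx => by
          simpa only [Real.norm_eq_abs] using hbound2 p hp x hx
      · filter_upwards [hae p₀] with x hx hxI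
        have hxS : g p₀ x ∉ S := hx hxI
        have h1 : ContinuousAt (deriv f) (g p₀ x) := hcont.continuousAt (hSopen.mem_nhds hxS)
        have h2 : ContinuousAt (fun p : ℝ × ℝ => deriv f (g p x)) p₀ :=
          Filter.Tendsto.comp h1 ((hgc x).continuousAt)
        exact h2.mul continuousAt_const
  rw [contDiff_one_iff_fderiv]
  refine ⟨fun p => ((main p).1).differentiableAt, ?_⟩
  have hfd : (fderiv ℝ fun p : ℝ × ℝ => ∫ x in (0:ℝ)..π, f (g p x) * w x) = A :=
    funext fun p => ((main p).1).fderiv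
  rw [hfd]
  exact ((continuous_iff_continuousAt.2 fun p => (main p).2.1).smul continuous_const).add
    ((continuous_iff_continuousAt.2 fun p => (main p).2.2).smul continuous_const)

theorem stmt13 (f : ℝ → ℝ) (hf : Continuous f) (hmono : StrictMono f) (h0 : f 0 = 0)
    (S : Finset ℝ) (hS0 : (0:ℝ) ∉ S)
    (hdiff : ∀ x ∉ (S : Set ℝ), DifferentiableAt ℝ f x)
    (hcont : ContinuousOn (deriv f) ((S : Set ℝ))ᶜ)
    (hlim : ∀ r ∈ S,
      (∃ L : ℝ, Filter.Tendsto (deriv f) (nhdsWithin r (Set.Ioi r)) (nhds L)) ∧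
      (∃ L : ℝ, Filter.Tendsto (deriv f) (nhdsWithin r (Set.Iio r)) (nhds L)))
    (hderiv0 : 0 < deriv f 0)
    (j k : ℕ) (hj : 0 < j) (hk : 0 < k) :
    ContDiff ℝ 1 (fun p : ℝ × ℝ =>
      (2 / π) * ∫ x in (0:ℝ)..π,
        (f (p.1 * Real.sin (j * x) + p.2 * Real.sin (k * x))
          + f (p.1 * Real.sin (j * x) - p.2 * Real.sin (k * x))) * Real.sin (j * x)) ∧
    ContDiff ℝ 1 (fun p : ℝ × ℝ =>
      (2 / π) * ∫ x in (0:ℝ)..π,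
        (f (p.1 * Real.sin (j * x) + p.2 * Real.sin (k * x))
          - f (p.1 * Real.sin (j * x) - p.2 * Real.sin (k * x))) * Real.sin (k * x)) := by
  have husin : ∀ (c : ℕ) (x : ℝ), AnalyticAt ℝ (fun x : ℝ => Real.sin (c * x)) x := by
    intro c x
    exact (analyticAt_rsin _).comp (analyticAt_const.mul analyticAt_id)
  have hnsin : ∀ (c : ℕ) (x : ℝ), AnalyticAt ℝ (fun x : ℝ => -Real.sin (c * x)) x := by
    intro c x
    exact (husin c x).neg
  have hsincont : ∀ c : ℕ, Continuous (fun x : ℝ => Real.sin (c * x)) := by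
    intro c
    exact Real.continuous_sin.comp (continuous_const.mul continuous_id)
  have hcmem : ∀ (p : ℝ × ℝ) (x : ℝ), Continuous (fun x : ℝ => Real.sin ((j:ℝ) * x)) :=
    fun _ _ => hsincont j
  have hu0 : ∀ c : ℕ, Real.sin ((c:ℝ) * 0) = 0 := by intro c; simp
  -- the four basic C¹ functions
  have H1 := key_c1 f hf S hS0 hdiff hcont hlim
    (fun x => Real.sin ((j:ℝ) * x)) (fun x => Real.sin ((k:ℝ) * x))
    (fun x => Real.sin ((j:ℝ) * x)) (husin j) (husin k) (hsincont j) (hu0 j) (hu0 k)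
  have H2 := key_c1 f hf S hS0 hdiff hcont hlim
    (fun x => Real.sin ((j:ℝ) * x)) (fun x => -Real.sin ((k:ℝ) * x))
    (fun x => Real.sin ((j:ℝ) * x)) (husin j) (hnsin k) (hsincont j) (hu0 j) (by simp)
  have H3 := key_c1 f hf S hS0 hdiff hcont hlim
    (fun x => Real.sin ((j:ℝ) * x)) (fun x => Real.sin ((k:ℝ) * x))
    (fun x => Real.sin ((k:ℝ) * x)) (husin j) (husin k) (hsincont k) (hu0 j) (hu0 k)
  have H4 := key_c1 f hf S hS0 hdiff hcont hlim
    (fun x => Real.sin ((j:ℝ) * x)) (fun x => -Real.sin ((k:ℝ) * x))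
    (fun x => Real.sin ((k:ℝ) * x)) (husin j) (hnsin k) (hsincont k) (hu0 j) (by simp)
  have hint : ∀ (p : ℝ × ℝ) (s : ℝ → ℝ) (t : ℝ → ℝ), Continuous s → Continuous t →
      IntervalIntegrable (fun x => f (p.1 * Real.sin ((j:ℝ) * x) + p.2 * s x) * t x)
        volume 0 π := by
    intro p s t hs ht
    exact ((hf.comp ((continuous_const.mul (hsincont j)).add (continuous_const.mul hs))).mul
      ht).intervalIntegrable 0 π
  have hsub : ∀ (p : ℝ × ℝ) (x : ℝ),
      p.1 * Real.sin ((j:ℝ) * x) - p.2 * Real.sin ((k:ℝ) * x)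
        = p.1 * Real.sin ((j:ℝ) * x) + p.2 * (-Real.sin ((k:ℝ) * x)) := by
    intro p x; ring
  constructor
  · have heq : (fun p : ℝ × ℝ =>
        (2 / π) * ∫ x in (0:ℝ)..π,
          (f (p.1 * Real.sin (j * x) + p.2 * Real.sin (k * x))
            + f (p.1 * Real.sin (j * x) - p.2 * Real.sin (k * x))) * Real.sin (j * x))
        = fun p : ℝ × ℝ => (2 / π) *
          ((∫ x in (0:ℝ)..π, f (p.1 * Real.sin ((j:ℝ) * x) + p.2 * Real.sin ((k:ℝ) * x))
              * Real.sin ((j:ℝ) * x))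
          + ∫ x in (0:ℝ)..π, f (p.1 * Real.sin ((j:ℝ) * x) + p.2 * (-Real.sin ((k:ℝ) * x)))
              * Real.sin ((j:ℝ) * x)) := by
      funext p
      congr 1
      rw [← intervalIntegral.integral_add (hint p _ _ (hsincont k) (hsincont j))
        (hint p (fun x => -Real.sin ((k:ℝ) * x)) _ (hsincont k).neg (hsincont j))]
      congr 1
      funext x
      rw [hsub p x, add_mul]
    rw [heq]
    exact contDiff_const.mul (H1.add H2)
  · have heq : (fun p : ℝ × ℝ =>
        (2 / π) * ∫ x in (0:ℝ)..π,
          (f (p.1 * Real.sin (j * x) + p.2 * Real.sin (k * x))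
            - f (p.1 * Real.sin (j * x) - p.2 * Real.sin (k * x))) * Real.sin (k * x))
        = fun p : ℝ × ℝ => (2 / π) *
          ((∫ x in (0:ℝ)..π, f (p.1 * Real.sin ((j:ℝ) * x) + p.2 * Real.sin ((k:ℝ) * x))
              * Real.sin ((k:ℝ) * x))
          - ∫ x in (0:ℝ)..π, f (p.1 * Real.sin ((j:ℝ) * x) + p.2 * (-Real.sin ((k:ℝ) * x)))
              * Real.sin ((k:ℝ) * x)) := by
      funext p
      congr 1
      rw [← intervalIntegral.integral_sub (hint p _ _ (hsincont k) (hsincont k))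
        (hint p (fun x => -Real.sin ((k:ℝ) * x)) _ (hsincont k).neg (hsincont k))]
      congr 1
      funext x
      rw [hsub p x, sub_mul]
    rw [heq]
    exact contDiff_const.mul (H3.sub H4)
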